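/- Let L be a compact, second countable Hausdorff space and let μ = {μ_t}_{t>0} be a measurable factorizing family over [0,1]×L. Then μ_t({∅}) > 0 for every t > 0, where ∅ denotes the empty set as an element of 𝒞_t. Consequently the family of Dirac measures ν_t := δ_∅ satisfies ν_t ≪ μ_t and ν_{s+t} = (ν_s⊗ν_t)∘⊕_{s,t}^{-1} for all s,t>0, and the vacuum vectors u_t^{(0)} := μ_t({∅})^{-1/2}·1_{{∅}} ∈ L²(𝒞_t,μ_t) satisfy ‖u_t^{(0)}‖ = 1 and u^{(0)}_{s+t}(Z) = Δ_{s,t}(Z)^{1/2}·u^{(0)}_s(Z∩([0,s]×L))·u^{(0)}_t((Z∩([s,s+t]×L))−(s,0)) for μ_{s+t}-a.e. Z, where Δ_{s,t} = d((μ_s⊗μ_t)∘⊕_{s,t}^{-1})/dμ_{s+t}. -/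

import Mathlib

open MeasureTheory Set
open scoped ENNReal NNReal

namespace RandomSets

variable (L : Type) [TopologicalSpace L]

/-- The time strip `[0,t] × L` inside `ℝ × L`. -/
def strip (t : ℝ) : Set (ℝ × L) := Set.Icc (0:ℝ) t ×ˢ (Set.univ : Set L)

lemma isClosed_strip (t : ℝ) : IsClosed (strip L t) :=
  isClosed_Icc.prod isClosed_univ

/-- Closed subsets of `[0,t] × L`. -/
def Cl (t : ℝ) : Type := {F : Set (ℝ × L) // IsClosed F ∧ F ⊆ strip L t}

variable {L}

lemma isClosed_fstImage (f g : ℝ → ℝ) (hg : Continuous g)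
    (hgf : ∀ x, g (f x) = x) (hfg : ∀ x, f (g x) = x)
    {A : Set (ℝ × L)} (hA : IsClosed A) :
    IsClosed ((fun p : ℝ × L => (f p.1, p.2)) '' A) := by
  have h : (fun p : ℝ × L => (f p.1, p.2)) '' A
      = (fun p : ℝ × L => (g p.1, p.2)) ⁻¹' A := by
    ext p
    constructor
    · rintro ⟨q, hq, rfl⟩
      simpa [hgf] using hq
    · intro hp
      exact ⟨(g p.1, p.2), hp, by simp [hfg]⟩
  rw [h]
  exact hA.preimage (by fun_prop)

variable (L)

/-- The Fell topology on `Cl L t`. -/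
def fellTop (t : ℝ) : TopologicalSpace (Cl L t) :=
  TopologicalSpace.generateFrom
    ({S | ∃ U : Set (ℝ × L), IsOpen U ∧
        S = {F : Cl L t | (F.1 ∩ (U ∩ strip L t)).Nonempty}} ∪
     {S | ∃ K : Set (ℝ × L), IsCompact K ∧ K ⊆ strip L t ∧
        S = {F : Cl L t | F.1 ∩ K = ∅}})

instance (t : ℝ) : TopologicalSpace (Cl L t) := fellTop L t

/-- `Σ_t`, the Borel σ-field of the Fell topology. -/
instance (t : ℝ) : MeasurableSpace (Cl L t) := borel (Cl L t)

variable {L}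

/-- Concatenation: `Z₁ ⊕_{s,t} Z₂ = Z₁ ∪ (s + Z₂)` as a closed subset of `[0,s+t] × L`. -/
noncomputable def concat (s t : ℝ) (Z₁ : Cl L s) (Z₂ : Cl L t) : Cl L (s + t) :=
  ⟨(Z₁.1 ∪ (fun p : ℝ × L => (p.1 + s, p.2)) '' Z₂.1) ∩ strip L (s + t), by
    refine ⟨IsClosed.inter ?_ (isClosed_strip L _), Set.inter_subset_right⟩
    exact Z₁.2.1.union (isClosed_fstImage (· + s) (· - s) (by fun_prop)
      (fun x => by ring) (fun x => by ring) Z₂.2.1)⟩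

/-- Concatenation as a map on pairs. -/
noncomputable def concatMap (s t : ℝ) : Cl L s × Cl L t → Cl L (s + t) :=
  fun p => concat s t p.1 p.2

/-- A factorizing family of probability measures over `[0,1] × L` (Definition 2.2 (i)–(ii)). -/
def IsFactorizing (μ : (t : ℝ) → Measure (Cl L t)) : Prop :=
  (∀ t : ℝ, 0 < t → IsProbabilityMeasure (μ t)) ∧
  (∀ s t : ℝ, 0 < s → 0 < t →
    μ (s + t) ≪ Measure.map (concatMap s t) ((μ s).prod (μ t)) ∧
    Measure.map (concatMap s t) ((μ s).prod (μ t)) ≪ μ (s + t)) ∧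
  (∀ t : ℝ, 0 < t → ∀ r ∈ Set.Icc (0:ℝ) t,
    μ t {Z : Cl L t | ∃ ℓ : L, (r, ℓ) ∈ Z.1} = 0)

/-- The empty configuration, as an element of `𝒞_t`. -/
noncomputable def emptyCl (t : ℝ) : Cl L t := ⟨∅, isClosed_empty, Set.empty_subset _⟩

/-- `Z ∩ ([0,s] × L)`, as a closed subset of `[0,s] × L`. -/
noncomputable def initPart (s : ℝ) {w : ℝ} (Z : Cl L w) : Cl L s :=
  ⟨Z.1 ∩ strip L s, (Z.2.1.inter (isClosed_strip L s)), Set.inter_subset_right⟩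

/-- `(Z ∩ ([s,s+t] × L)) - (s,0)`, as a closed subset of `[0,t] × L`. -/
noncomputable def tailPart (s t : ℝ) {w : ℝ} (Z : Cl L w) : Cl L t :=
  ⟨(fun p : ℝ × L => (p.1 - s, p.2)) ''
      (Z.1 ∩ (Set.Icc s (s + t) ×ˢ (Set.univ : Set L))), by
    constructor
    · exact isClosed_fstImage (· - s) (· + s) (by fun_prop)
        (fun x => by ring) (fun x => by ring)
        (Z.2.1.inter (isClosed_Icc.prod isClosed_univ))
    · rintro p ⟨q, ⟨-, hq⟩, rfl⟩
      simp only [Set.mem_prod, Set.mem_Icc, Set.mem_univ, and_true] at hq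
      simp only [strip, Set.mem_prod, Set.mem_Icc, Set.mem_univ, and_true]
      constructor <;> linarith [hq.1, hq.2]⟩

/-- Time rescaling `σ_t : 𝒞_t → 𝒞_1` (junk value for `t ≤ 0`). -/
noncomputable def timeScale (t : ℝ) (Z : Cl L t) : Cl L 1 :=
  if ht : 0 < t then
    ⟨(fun p : ℝ × L => (p.1 / t, p.2)) '' Z.1, by
      constructor
      · exact isClosed_fstImage (· / t) (· * t)
          (by fun_prop) (fun x => div_mul_cancel₀ x ht.ne')
          (fun x => mul_div_cancel_right₀ x ht.ne') Z.2.1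
      · rintro p ⟨q, hq, rfl⟩
        have h1 := Z.2.2 hq
        simp only [strip, Set.mem_prod, Set.mem_Icc, Set.mem_univ, and_true] at h1 ⊢
        exact ⟨div_nonneg h1.1 ht.le, (div_le_one ht).mpr h1.2⟩⟩
  else ⟨∅, isClosed_empty, Set.empty_subset _⟩

/-- The vacuum vector `u_t^{(0)} = μ_t({∅})^{-1/2} · 1_{{∅}} ∈ L²(𝒞_t, μ_t)`. -/
noncomputable def vacuumVec (μ : (t : ℝ) → Measure (Cl L t)) (t : ℝ) : Cl L t → ℝ :=
  fun Z => (Real.sqrt ((μ t {emptyCl t}).toReal))⁻¹ *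
    Set.indicator {emptyCl t} (fun _ => (1:ℝ)) Z

section Aux

instance (t : ℝ) : BorelSpace (Cl L t) := ⟨rfl⟩

lemma isOpen_miss {t : ℝ} {K : Set (ℝ × L)} (hK : IsCompact K) (hKs : K ⊆ strip L t) :
    IsOpen {F : Cl L t | F.1 ∩ K = ∅} :=
  TopologicalSpace.isOpen_generateFrom_of_mem (Or.inr ⟨K, hK, hKs, rfl⟩)

lemma measurableSet_miss {t : ℝ} {K : Set (ℝ × L)} (hK : IsCompact K) (hKs : K ⊆ strip L t) :
    MeasurableSet {F : Cl L t | F.1 ∩ K = ∅} :=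
  (isOpen_miss hK hKs).measurableSet

lemma isCompact_strip [CompactSpace L] (t : ℝ) : IsCompact (strip L t) :=
  isCompact_Icc.prod isCompact_univ

lemma singleton_empty_eq (t : ℝ) :
    ({emptyCl t} : Set (Cl L t)) = {F : Cl L t | F.1 ∩ strip L t = ∅} := by
  ext F
  simp only [Set.mem_singleton_iff, Set.mem_setOf_eq]
  rw [Set.inter_eq_left.mpr F.2.2]
  constructor
  · rintro rfl; rfl
  · intro h; exact Subtype.ext h

lemma measurableSet_singleton_empty [CompactSpace L] (t : ℝ) :
    MeasurableSet ({emptyCl t} : Set (Cl L t)) := by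
  rw [singleton_empty_eq]
  exact measurableSet_miss (isCompact_strip t) subset_rfl

lemma concat_val {s t : ℝ} (hs : 0 ≤ s) (ht : 0 ≤ t) (Z₁ : Cl L s) (Z₂ : Cl L t) :
    (concat s t Z₁ Z₂).1 = Z₁.1 ∪ (fun p : ℝ × L => (p.1 + s, p.2)) '' Z₂.1 := by
  apply Set.inter_eq_left.mpr
  rintro p (hp | ⟨q, hq, rfl⟩)
  · have h := Z₁.2.2 hp
    simp only [strip, Set.mem_prod, Set.mem_Icc, Set.mem_univ, and_true] at h ⊢
    exact ⟨h.1, by linarith [h.2]⟩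
  · have h := Z₂.2.2 hq
    simp only [strip, Set.mem_prod, Set.mem_Icc, Set.mem_univ, and_true] at h ⊢
    constructor <;> linarith [h.1, h.2]

lemma concat_eq_empty_iff {s t : ℝ} (hs : 0 ≤ s) (ht : 0 ≤ t) (Z₁ : Cl L s) (Z₂ : Cl L t) :
    concat s t Z₁ Z₂ = emptyCl (s + t) ↔ Z₁ = emptyCl s ∧ Z₂ = emptyCl t := by
  constructor
  · intro h
    have h1 : (concat s t Z₁ Z₂).1 = (∅ : Set (ℝ × L)) := congrArg Subtype.val h
    rw [concat_val hs ht, Set.union_empty_iff, Set.image_eq_empty] at h1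
    exact ⟨Subtype.ext h1.1, Subtype.ext h1.2⟩
  · rintro ⟨rfl, rfl⟩
    apply Subtype.ext
    show (concat s t (emptyCl s) (emptyCl t)).1 = (∅ : Set (ℝ × L))
    rw [concat_val hs ht]
    simp [emptyCl]

lemma concat_preimage_empty {s t : ℝ} (hs : 0 ≤ s) (ht : 0 ≤ t) :
    concatMap s t ⁻¹' ({emptyCl (s + t)} : Set (Cl L (s + t)))
      = ({emptyCl s} : Set (Cl L s)) ×ˢ ({emptyCl t} : Set (Cl L t)) := by
  ext ⟨Z₁, Z₂⟩
  simpa [concatMap] using concat_eq_empty_iff hs ht Z₁ Z₂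

variable {μ : (t : ℝ) → Measure (Cl L t)}

lemma aemeasurable_concatMap (hμ : IsFactorizing μ) {s t : ℝ} (hs : 0 < s) (ht : 0 < t) :
    AEMeasurable (concatMap s t) ((μ s).prod (μ t)) := by
  by_contra h
  have hac := (hμ.2.1 s t hs ht).1
  rw [Measure.map_of_not_aemeasurable h] at hac
  have h1 : μ (s + t) Set.univ = 0 := hac (by simp)
  haveI := hμ.1 (s + t) (by linarith)
  rw [measure_univ] at h1
  exact one_ne_zero h1

lemma map_concat_singleton (hμ : IsFactorizing μ) [CompactSpace L] {s t : ℝ}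
    (hs : 0 < s) (ht : 0 < t) :
    Measure.map (concatMap s t) ((μ s).prod (μ t)) {emptyCl (s + t)}
      = μ s {emptyCl s} * μ t {emptyCl t} := by
  haveI := hμ.1 s hs
  haveI := hμ.1 t ht
  rw [Measure.map_apply_of_aemeasurable (aemeasurable_concatMap hμ hs ht)
    (measurableSet_singleton_empty _), concat_preimage_empty hs.le ht.le,
    Measure.prod_prod]

lemma empty_null_iff (hμ : IsFactorizing μ) [CompactSpace L] {s t : ℝ}
    (hs : 0 < s) (ht : 0 < t) :
    μ (s + t) {emptyCl (s + t)} = 0 ↔ μ s {emptyCl s} = 0 ∨ μ t {emptyCl t} = 0 := by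
  constructor
  · intro h
    have h2 := (hμ.2.1 s t hs ht).2 h
    rw [map_concat_singleton hμ hs ht] at h2
    exact mul_eq_zero.mp h2
  · intro h
    apply (hμ.2.1 s t hs ht).1
    rw [map_concat_singleton hμ hs ht]
    rcases h with h | h <;> simp [h]

lemma inner_null (hμ : IsFactorizing μ) [CompactSpace L] {s t : ℝ} (hs : 0 < s) (ht : 0 < t)
    (h0 : μ s {emptyCl s} = 0) :
    μ (s + t) {F : Cl L (s + t) | F.1 ∩ (Set.Icc 0 s ×ˢ (Set.univ : Set L)) = ∅} = 0 := by
  haveI := hμ.1 s hs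
  haveI := hμ.1 t ht
  have hK : IsCompact (Set.Icc (0:ℝ) s ×ˢ (Set.univ : Set L)) :=
    isCompact_Icc.prod isCompact_univ
  have hKs : (Set.Icc (0:ℝ) s ×ˢ (Set.univ : Set L)) ⊆ strip L (s + t) :=
    Set.prod_mono (Set.Icc_subset_Icc le_rfl (by linarith)) subset_rfl
  apply (hμ.2.1 s t hs ht).1
  rw [Measure.map_apply_of_aemeasurable (aemeasurable_concatMap hμ hs ht)
    (measurableSet_miss hK hKs)]
  have hsub : concatMap s t ⁻¹'
      {F : Cl L (s + t) | F.1 ∩ (Set.Icc 0 s ×ˢ (Set.univ : Set L)) = ∅}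
      ⊆ ({emptyCl s} : Set (Cl L s)) ×ˢ (Set.univ : Set (Cl L t)) := by
    rintro ⟨Z₁, Z₂⟩ hmem
    refine ⟨?_, trivial⟩
    have hmem' : (concat s t Z₁ Z₂).1 ∩ (Set.Icc 0 s ×ˢ (Set.univ : Set L)) = ∅ := hmem
    show Z₁ = emptyCl s
    apply Subtype.ext
    show Z₁.1 = ∅
    rw [Set.eq_empty_iff_forall_notMem]
    intro p hp
    have hpc : p ∈ (concat s t Z₁ Z₂).1 := by
      rw [concat_val hs.le ht.le]; exact Or.inl hp
    have : p ∈ (concat s t Z₁ Z₂).1 ∩ (Set.Icc 0 s ×ˢ (Set.univ : Set L)) :=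
      ⟨hpc, Z₁.2.2 hp⟩
    rw [hmem'] at this
    exact this
  refine le_antisymm ?_ zero_le
  calc ((μ s).prod (μ t)) _ ≤ ((μ s).prod (μ t))
        (({emptyCl s} : Set (Cl L s)) ×ˢ (Set.univ : Set (Cl L t))) := measure_mono hsub
    _ = 0 := by rw [Measure.prod_prod, h0, zero_mul]

lemma outer_null (hμ : IsFactorizing μ) [CompactSpace L] {s t c : ℝ} (hs : 0 < s)
    (hc : 0 < c) (hct : c < t) (h0 : μ c {emptyCl c} = 0) :
    μ (s + t) {F : Cl L (s + t) | F.1 ∩ (Set.Icc s (s + c) ×ˢ (Set.univ : Set L)) = ∅}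
      = 0 := by
  have ht : 0 < t := hc.trans hct
  haveI := hμ.1 s hs
  haveI := hμ.1 t ht
  have hK : IsCompact (Set.Icc s (s + c) ×ˢ (Set.univ : Set L)) :=
    isCompact_Icc.prod isCompact_univ
  have hKs : (Set.Icc s (s + c) ×ˢ (Set.univ : Set L)) ⊆ strip L (s + t) :=
    Set.prod_mono (Set.Icc_subset_Icc hs.le (by linarith)) subset_rfl
  apply (hμ.2.1 s t hs ht).1
  rw [Measure.map_apply_of_aemeasurable (aemeasurable_concatMap hμ hs ht)
    (measurableSet_miss hK hKs)]
  have hCnull : μ t {W : Cl L t | W.1 ∩ (Set.Icc 0 c ×ˢ (Set.univ : Set L)) = ∅} = 0 := by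
    have h2 := inner_null hμ hc (sub_pos.mpr hct) h0
    rw [show c + (t - c) = t by ring] at h2
    exact h2
  have hsub : concatMap s t ⁻¹'
      {F : Cl L (s + t) | F.1 ∩ (Set.Icc s (s + c) ×ˢ (Set.univ : Set L)) = ∅}
      ⊆ (Set.univ : Set (Cl L s)) ×ˢ
        {W : Cl L t | W.1 ∩ (Set.Icc 0 c ×ˢ (Set.univ : Set L)) = ∅} := by
    rintro ⟨Z₁, Z₂⟩ hmem
    have hmem' : (concat s t Z₁ Z₂).1 ∩ (Set.Icc s (s + c) ×ˢ (Set.univ : Set L)) = ∅ := hmem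
    refine ⟨trivial, ?_⟩
    show Z₂.1 ∩ (Set.Icc 0 c ×ˢ (Set.univ : Set L)) = ∅
    rw [Set.eq_empty_iff_forall_notMem]
    rintro p ⟨hp, hpI, -⟩
    rw [Set.mem_Icc] at hpI
    have hpc : ((p.1 + s, p.2) : ℝ × L) ∈ (concat s t Z₁ Z₂).1 := by
      rw [concat_val hs.le ht.le]; exact Or.inr ⟨p, hp, rfl⟩
    have hmemK : ((p.1 + s, p.2) : ℝ × L) ∈ Set.Icc s (s + c) ×ˢ (Set.univ : Set L) :=
      ⟨⟨show s ≤ p.1 + s by linarith [hpI.1],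
        show p.1 + s ≤ s + c by linarith [hpI.2]⟩, trivial⟩
    have : ((p.1 + s, p.2) : ℝ × L) ∈
        (concat s t Z₁ Z₂).1 ∩ (Set.Icc s (s + c) ×ˢ (Set.univ : Set L)) := ⟨hpc, hmemK⟩
    rw [hmem'] at this
    exact this
  refine le_antisymm ?_ zero_le
  calc ((μ s).prod (μ t)) _ ≤ ((μ s).prod (μ t))
        ((Set.univ : Set (Cl L s)) ×ˢ
          {W : Cl L t | W.1 ∩ (Set.Icc 0 c ×ˢ (Set.univ : Set L)) = ∅}) :=
      measure_mono hsub
    _ = 0 := by rw [Measure.prod_prod, hCnull, mul_zero]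

private noncomputable def aSeq (n : ℕ) : ℝ := 1/2 - ((4:ℝ) * ((n:ℝ) + 1))⁻¹

private noncomputable def bSeq (n : ℕ) : ℝ := 1/2 + ((4:ℝ) * ((n:ℝ) + 1))⁻¹

private lemma dSeq_pos (n : ℕ) : 0 < ((4:ℝ) * ((n:ℝ) + 1))⁻¹ := by positivity

private lemma dSeq_le (n : ℕ) : ((4:ℝ) * ((n:ℝ) + 1))⁻¹ ≤ 4⁻¹ := by
  apply inv_anti₀ (by norm_num)
  nlinarith [Nat.cast_nonneg (α := ℝ) n]

private lemma dSeq_anti (n : ℕ) :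
    ((4:ℝ) * (((n:ℝ) + 1) + 1))⁻¹ ≤ ((4:ℝ) * ((n:ℝ) + 1))⁻¹ := by
  apply inv_anti₀ (by positivity)
  nlinarith [Nat.cast_nonneg (α := ℝ) n]

private lemma aSeq_pos (n : ℕ) : 0 < aSeq n := by
  unfold aSeq; linarith [dSeq_le n]

private lemma bSeq_lt_one (n : ℕ) : bSeq n < 1 := by
  unfold bSeq; linarith [dSeq_le n]

private lemma aSeq_lt_bSeq (n : ℕ) : aSeq n < bSeq n := by
  unfold aSeq bSeq; linarith [dSeq_pos n]

private lemma aSeq_mono (n : ℕ) : aSeq n ≤ aSeq (n + 1) := by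
  unfold aSeq; push_cast; linarith [dSeq_anti n]

private lemma bSeq_anti (n : ℕ) : bSeq (n + 1) ≤ bSeq n := by
  unfold bSeq; push_cast; linarith [dSeq_anti n]

lemma exists_empty_pos (hμ : IsFactorizing μ) [CompactSpace L] :
    ∃ t : ℝ, 0 < t ∧ μ t {emptyCl t} ≠ 0 := by
  by_contra hcon
  push_neg at hcon
  have hBnull : ∀ n : ℕ,
      μ 1 {F : Cl L 1 | F.1 ∩ (Set.Icc (aSeq n) (bSeq n) ×ˢ (Set.univ : Set L)) = ∅}
        = 0 := by
    intro n
    have h2 := outer_null hμ (s := aSeq n) (t := 1 - aSeq n) (c := bSeq n - aSeq n)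
      (aSeq_pos n) (by linarith [aSeq_lt_bSeq n]) (by linarith [bSeq_lt_one n])
      (hcon _ (by linarith [aSeq_lt_bSeq n]))
    rw [show aSeq n + (1 - aSeq n) = 1 by ring,
      show aSeq n + (bSeq n - aSeq n) = bSeq n by ring] at h2
    exact h2
  have hGnull : μ 1 {Z : Cl L 1 | ∃ ℓ : L, ((1/2 : ℝ), ℓ) ∈ Z.1} = 0 :=
    hμ.2.2 1 one_pos (1/2) (by norm_num)
  have hcover : ∀ Z : Cl L 1,
      Z ∈ (⋃ n : ℕ,
          {F : Cl L 1 | F.1 ∩ (Set.Icc (aSeq n) (bSeq n) ×ˢ (Set.univ : Set L)) = ∅})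
        ∪ {Z : Cl L 1 | ∃ ℓ : L, ((1/2 : ℝ), ℓ) ∈ Z.1} := by
    intro Z
    by_cases hZ : ∃ n : ℕ, Z.1 ∩ (Set.Icc (aSeq n) (bSeq n) ×ˢ (Set.univ : Set L)) = ∅
    · left
      obtain ⟨n, hn⟩ := hZ
      exact Set.mem_iUnion.mpr ⟨n, hn⟩
    · right
      push_neg at hZ
      have hcl : ∀ n : ℕ,
          IsClosed (Z.1 ∩ (Set.Icc (aSeq n) (bSeq n) ×ˢ (Set.univ : Set L))) :=
        fun n => Z.2.1.inter (isClosed_Icc.prod isClosed_univ)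
      obtain ⟨p, hp⟩ :=
        IsCompact.nonempty_iInter_of_sequence_nonempty_isCompact_isClosed
          (fun n => Z.1 ∩ (Set.Icc (aSeq n) (bSeq n) ×ˢ (Set.univ : Set L)))
          (fun n => Set.inter_subset_inter_right _
            (Set.prod_mono_left (Set.Icc_subset_Icc (aSeq_mono n)
              (by push_cast; exact bSeq_anti n))))
          (fun n => hZ n)
          ((isCompact_strip 1).of_isClosed_subset (hcl 0)
            (Set.inter_subset_left.trans Z.2.2))
          hcl
      rw [Set.mem_iInter] at hp
      have hph : p.1 = 1/2 := by
        by_contra hne0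
        have hεpos : 0 < |p.1 - 1/2| := by
          rw [abs_pos]; intro h; exact hne0 (by linarith [sub_eq_zero.mp h])
        obtain ⟨n, hn⟩ := exists_nat_gt |p.1 - 1/2|⁻¹
        have h4 : |p.1 - 1/2|⁻¹ < 4 * ((n:ℝ) + 1) := by
          have hnn : (0:ℝ) ≤ n := Nat.cast_nonneg n
          nlinarith
        have hlt : ((4:ℝ) * ((n:ℝ) + 1))⁻¹ < |p.1 - 1/2| :=
          inv_lt_of_inv_lt₀ hεpos h4
        have hIa : aSeq n ≤ p.1 := ((hp n).2).1.1
        have hIb : p.1 ≤ bSeq n := ((hp n).2).1.2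
        have habs : |p.1 - 1/2| ≤ ((4:ℝ) * ((n:ℝ) + 1))⁻¹ := by
          rw [abs_le]
          unfold aSeq at hIa
          unfold bSeq at hIb
          constructor <;> linarith
        linarith
      refine ⟨p.2, ?_⟩
      have hpz : p ∈ Z.1 := (hp 0).1
      rwa [show ((1/2 : ℝ), p.2) = p by rw [← hph]]
  haveI := hμ.1 1 one_pos
  have h1 : μ 1 ((⋃ n : ℕ, {F : Cl L 1 |
        F.1 ∩ (Set.Icc (aSeq n) (bSeq n) ×ˢ (Set.univ : Set L)) = ∅})
      ∪ {Z : Cl L 1 | ∃ ℓ : L, ((1/2 : ℝ), ℓ) ∈ Z.1}) = 0 :=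
    measure_union_null (measure_iUnion_null hBnull) hGnull
  have h2 : μ 1 Set.univ ≤ 0 := by
    rw [← h1]
    exact measure_mono (fun Z _ => hcover Z)
  rw [measure_univ] at h2
  exact absurd (le_antisymm h2 zero_le) one_ne_zero

lemma empty_pos (hμ : IsFactorizing μ) [CompactSpace L] {t : ℝ} (ht : 0 < t) :
    μ t {emptyCl t} ≠ 0 := by
  obtain ⟨t₀, ht₀, h₀⟩ := exists_empty_pos hμ
  have main : ∀ n : ℕ, ∀ u : ℝ, 0 < u → u ≤ n * t₀ → μ u {emptyCl u} ≠ 0 := by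
    intro n
    induction n with
    | zero =>
      intro u hu hle
      exfalso
      simp only [Nat.cast_zero, zero_mul] at hle
      linarith
    | succ n ih =>
      intro u hu hle
      rcases lt_trichotomy u t₀ with hlt | heq | hgt
      · have h2 := empty_null_iff hμ hu (sub_pos.mpr hlt)
        rw [show u + (t₀ - u) = t₀ by ring] at h2
        intro hcz
        exact h₀ (h2.mpr (Or.inl hcz))
      · rw [heq]; exact h₀
      · have h2 := empty_null_iff hμ ht₀ (sub_pos.mpr hgt)
        rw [show t₀ + (u - t₀) = u by ring] at h2
        intro hcz
        rcases h2.mp hcz with h | h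
        · exact h₀ h
        · exact ih (u - t₀) (sub_pos.mpr hgt) (by push_cast at hle ⊢; linarith) h
  obtain ⟨n, hn⟩ := exists_nat_ge (t / t₀)
  refine main n t ht ?_
  rw [div_le_iff₀ ht₀] at hn
  linarith

lemma dirac_empty_ac [CompactSpace L] {t : ℝ} {μt : Measure (Cl L t)}
    (hp : μt {emptyCl t} ≠ 0) :
    Measure.dirac (emptyCl t) ≪ μt := by
  refine Measure.AbsolutelyContinuous.mk (fun A hA h0 => ?_)
  by_cases hmem : emptyCl t ∈ A
  · exact absurd
      (le_antisymm ((measure_mono (Set.singleton_subset_iff.mpr hmem)).trans h0.le)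
        zero_le) hp
  · rw [Measure.dirac_apply' _ hA, Set.indicator_of_notMem hmem]

lemma map_concat_dirac (hμ : IsFactorizing μ) [CompactSpace L] {s t : ℝ}
    (hs : 0 < s) (ht : 0 < t)
    (hps : μ s {emptyCl s} ≠ 0) (hpt : μ t {emptyCl t} ≠ 0) :
    Measure.map (concatMap s t)
        ((Measure.dirac (emptyCl s)).prod (Measure.dirac (emptyCl t)))
      = (Measure.dirac (emptyCl (s + t)) : Measure (Cl L (s + t))) := by
  haveI := hμ.1 s hs
  haveI := hμ.1 t ht
  have hacp : (Measure.dirac (emptyCl s)).prod (Measure.dirac (emptyCl t))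
      ≪ (μ s).prod (μ t) :=
    Measure.AbsolutelyContinuous.prod (dirac_empty_ac hps) (dirac_empty_ac hpt)
  have hae : AEMeasurable (concatMap s t)
      ((Measure.dirac (emptyCl s)).prod (Measure.dirac (emptyCl t))) :=
    (aemeasurable_concatMap hμ hs ht).mono_ac hacp
  rw [Measure.dirac_prod_dirac] at hae ⊢
  obtain ⟨g, hg, hfg⟩ := hae
  have hpt0 : concatMap s t (emptyCl s, emptyCl t) = g (emptyCl s, emptyCl t) := by
    by_contra hne
    have h0 := ae_iff.mp hfg
    rw [Measure.dirac_apply_of_mem (show (emptyCl s, emptyCl t) ∈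
      {x | ¬ concatMap s t x = g x} from hne)] at h0
    exact one_ne_zero h0
  calc Measure.map (concatMap s t) (Measure.dirac (emptyCl s, emptyCl t))
      = Measure.map g (Measure.dirac (emptyCl s, emptyCl t)) := Measure.map_congr hfg
    _ = Measure.dirac (g (emptyCl s, emptyCl t)) := Measure.map_dirac' hg _
    _ = Measure.dirac (emptyCl (s + t)) := by
        rw [← hpt0,
          show concatMap s t (emptyCl s, emptyCl t) = emptyCl (s + t) from
            (concat_eq_empty_iff hs.le ht.le _ _).mpr ⟨rfl, rfl⟩]

lemma initPart_empty {s w : ℝ} : initPart s (emptyCl w) = emptyCl s (L := L) := by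
  apply Subtype.ext
  show (∅ : Set (ℝ × L)) ∩ strip L s = ∅
  simp

lemma tailPart_empty {s t w : ℝ} : tailPart s t (emptyCl w) = emptyCl t (L := L) := by
  apply Subtype.ext
  show (fun p : ℝ × L => (p.1 - s, p.2)) ''
      ((∅ : Set (ℝ × L)) ∩ (Set.Icc s (s + t) ×ˢ (Set.univ : Set L))) = ∅
  simp

lemma parts_empty_iff {s t : ℝ} (hs : 0 < s) (ht : 0 < t) (Z : Cl L (s + t)) :
    initPart s Z = emptyCl s ∧ tailPart s t Z = emptyCl t ↔ Z = emptyCl (s + t) := by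
  constructor
  · rintro ⟨h1, h2⟩
    apply Subtype.ext
    show Z.1 = ∅
    rw [Set.eq_empty_iff_forall_notMem]
    intro p hp
    have hps := Z.2.2 hp
    simp only [strip, Set.mem_prod, Set.mem_Icc, Set.mem_univ, and_true] at hps
    rcases le_total p.1 s with hle | hge
    · have hmem : p ∈ (initPart s Z).1 := ⟨hp, ⟨⟨hps.1, hle⟩, trivial⟩⟩
      rw [h1] at hmem
      exact hmem
    · have hmem : ((p.1 - s, p.2) : ℝ × L) ∈ (tailPart s t Z).1 :=
        ⟨p, ⟨hp, ⟨⟨hge, hps.2⟩, trivial⟩⟩, rfl⟩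
      rw [h2] at hmem
      exact hmem
  · rintro rfl
    exact ⟨initPart_empty, tailPart_empty⟩

lemma delta_empty (hμ : IsFactorizing μ) [CompactSpace L] {s t : ℝ} (hs : 0 < s) (ht : 0 < t)
    (Δ : Cl L (s + t) → ℝ≥0∞)
    (hΔ : Measure.map (concatMap s t) ((μ s).prod (μ t)) = (μ (s + t)).withDensity Δ) :
    Δ (emptyCl (s + t)) * μ (s + t) {emptyCl (s + t)}
      = μ s {emptyCl s} * μ t {emptyCl t} := by
  have hm := measurableSet_singleton_empty (L := L) (s + t)
  have h1 := map_concat_singleton hμ hs ht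
  rw [hΔ, withDensity_apply _ hm] at h1
  calc Δ (emptyCl (s + t)) * μ (s + t) {emptyCl (s + t)}
      = ∫⁻ _ in {emptyCl (s + t)}, Δ (emptyCl (s + t)) ∂(μ (s + t)) :=
        (setLIntegral_const _ _).symm
    _ = ∫⁻ Z in {emptyCl (s + t)}, Δ Z ∂(μ (s + t)) :=
        (setLIntegral_congr_fun hm (fun Z hZ => by
          rw [Set.mem_singleton_iff] at hZ; rw [hZ])).symm
    _ = μ s {emptyCl s} * μ t {emptyCl t} := h1

lemma vacuum_factor (hμ : IsFactorizing μ) [CompactSpace L] {s t : ℝ} (hs : 0 < s)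
    (ht : 0 < t)
    (hps : μ s {emptyCl s} ≠ 0) (hpt : μ t {emptyCl t} ≠ 0)
    (hpst : μ (s + t) {emptyCl (s + t)} ≠ 0)
    (Δ : Cl L (s + t) → ℝ≥0∞)
    (hΔ : Measure.map (concatMap s t) ((μ s).prod (μ t)) = (μ (s + t)).withDensity Δ)
    (Z : Cl L (s + t)) :
    vacuumVec μ (s + t) Z
      = Real.sqrt ((Δ Z).toReal) * vacuumVec μ s (initPart s Z) *
          vacuumVec μ t (tailPart s t Z) := by
  haveI := hμ.1 s hs
  haveI := hμ.1 t ht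
  haveI := hμ.1 (s + t) (by linarith)
  by_cases hZ : Z = emptyCl (s + t)
  · subst hZ
    rw [initPart_empty, tailPart_empty]
    simp only [vacuumVec, Set.indicator_of_mem (Set.mem_singleton _), mul_one]
    set A := (μ s {emptyCl s}).toReal with hA
    set B := (μ t {emptyCl t}).toReal with hB
    set C := (μ (s + t) {emptyCl (s + t)}).toReal with hC
    have hApos : 0 < A := ENNReal.toReal_pos hps (measure_ne_top _ _)
    have hBpos : 0 < B := ENNReal.toReal_pos hpt (measure_ne_top _ _)
    have hCpos : 0 < C := ENNReal.toReal_pos hpst (measure_ne_top _ _)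
    have hd := delta_empty hμ hs ht Δ hΔ
    have hdne : Δ (emptyCl (s + t)) ≠ ⊤ := by
      intro htop
      rw [htop, ENNReal.top_mul hpst] at hd
      exact ENNReal.mul_ne_top (measure_ne_top _ _) (measure_ne_top _ _) hd.symm
    have hdr : (Δ (emptyCl (s + t))).toReal * C = A * B := by
      have := congrArg ENNReal.toReal hd
      rwa [ENNReal.toReal_mul, ENNReal.toReal_mul] at this
    have hdval : (Δ (emptyCl (s + t))).toReal = A * B / C :=
      (eq_div_iff hCpos.ne').mpr hdr
    rw [hdval, Real.sqrt_div (by positivity), Real.sqrt_mul hApos.le]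
    have hsA : (0:ℝ) < Real.sqrt A := Real.sqrt_pos.mpr hApos
    have hsB : (0:ℝ) < Real.sqrt B := Real.sqrt_pos.mpr hBpos
    have hsC : (0:ℝ) < Real.sqrt C := Real.sqrt_pos.mpr hCpos
    field_simp
  · have hparts : ¬(initPart s Z = emptyCl s ∧ tailPart s t Z = emptyCl t) :=
      fun h => hZ ((parts_empty_iff hs ht Z).mp h)
    simp only [vacuumVec, Set.indicator_apply, Set.mem_singleton_iff]
    rcases not_and_or.mp hparts with h | h <;> simp [hZ, h]

lemma vacuum_norm (hμ : IsFactorizing μ) [CompactSpace L] {t : ℝ} (ht : 0 < t)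
    (hp : μ t {emptyCl t} ≠ 0) : eLpNorm (vacuumVec μ t) 2 (μ t) = 1 := by
  haveI := hμ.1 t ht
  have hfin : μ t {emptyCl t} ≠ ⊤ := measure_ne_top _ _
  set x := (μ t {emptyCl t}).toReal with hx
  have hx0 : 0 < x := ENNReal.toReal_pos hp hfin
  have hrw : vacuumVec μ t = Set.indicator {emptyCl t} (fun _ => (Real.sqrt x)⁻¹) := by
    funext Z
    by_cases h : Z ∈ ({emptyCl t} : Set (Cl L t)) <;>
      simp [vacuumVec, Set.indicator_of_mem, Set.indicator_of_notMem, h, hx]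
  rw [hrw, eLpNorm_indicator_const (measurableSet_singleton_empty t) two_ne_zero
    ENNReal.ofNat_ne_top]
  have h2 : ((2:ℝ≥0∞)).toReal = 2 := by simp
  rw [h2]
  have hμr : μ t {emptyCl t} = ENNReal.ofReal x := (ENNReal.ofReal_toReal hfin).symm
  rw [hμr, ENNReal.ofReal_rpow_of_pos hx0,
    Real.enorm_eq_ofReal (by positivity),
    ← ENNReal.ofReal_mul (by positivity), ← Real.sqrt_eq_rpow,
    inv_mul_cancel₀ (Real.sqrt_pos.mpr hx0).ne', ENNReal.ofReal_one]

end Aux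

/-- Corollary 3.3: if `L` is compact, then for every measurable
factorizing family `μ` over `[0,1] × L` the empty configuration has positive mass,
the Dirac family `δ_∅` is a dominated exactly factorizing family, and the vacuum
vectors form a normalized unit. -/
theorem vacuum_unit_of_compact
    [SecondCountableTopology L] [LocallyCompactSpace L] [T2Space L] [CompactSpace L]
    (μ : (t : ℝ) → Measure (Cl L t)) (hμ : IsFactorizing μ)
    (hatom : ∀ t : ℝ, 0 < t → ∀ S : Finset (Cl L t), μ t ((↑S : Set (Cl L t))ᶜ) ≠ 0)
    (R : Set (Set (Cl L 1))) (hRcount : R.Countable) (hRring : MeasureTheory.IsSetRing R)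
    (hRgen : MeasurableSpace.generateFrom R = (inferInstance : MeasurableSpace (Cl L 1)))
    (hRmeas : ∀ A ∈ R, Measurable fun t : Set.Ioi (0:ℝ) =>
      Measure.map (timeScale t.1) (μ t.1) A)
    (Δ : (s t : ℝ) → Cl L (s + t) → ℝ≥0∞)
    (hΔ : ∀ s t : ℝ, 0 < s → 0 < t →
      Measure.map (concatMap s t) ((μ s).prod (μ t))
        = (μ (s + t)).withDensity (Δ s t)) :
    (∀ t : ℝ, 0 < t → 0 < μ t {emptyCl t}) ∧
    (∀ t : ℝ, 0 < t → Measure.dirac (emptyCl t) ≪ μ t) ∧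
    (∀ s t : ℝ, 0 < s → 0 < t →
      Measure.map (concatMap s t)
          ((Measure.dirac (emptyCl s)).prod (Measure.dirac (emptyCl t)))
        = (Measure.dirac (emptyCl (s + t)) : Measure (Cl L (s + t)))) ∧
    (∀ t : ℝ, 0 < t → eLpNorm (vacuumVec μ t) 2 (μ t) = 1) ∧
    (∀ s t : ℝ, 0 < s → 0 < t →
      vacuumVec μ (s + t) =ᵐ[μ (s + t)] fun Z =>
        Real.sqrt ((Δ s t Z).toReal) * vacuumVec μ s (initPart s Z) *
          vacuumVec μ t (tailPart s t Z)) := by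
  have key : ∀ u : ℝ, 0 < u → μ u {emptyCl u} ≠ 0 := fun u hu => empty_pos hμ hu
  refine ⟨fun t ht => pos_iff_ne_zero.mpr (key t ht),
    fun t ht => dirac_empty_ac (key t ht),
    fun s t hs ht => map_concat_dirac hμ hs ht (key s hs) (key t ht),
    fun t ht => vacuum_norm hμ ht (key t ht),
    fun s t hs ht => Filter.Eventually.of_forall
      (vacuum_factor hμ hs ht (key s hs) (key t ht) (key (s + t) (by linarith))
        (Δ s t) (hΔ s t hs ht))⟩


end RandomSets
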